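/- If ρ_{AA'} is a density operator on A⊗A' with dim A' = d and ρ_A = Tr_{A'} ρ_{AA'}, then Δ(ρ_A) ≤ Δ(ρ_{AA'}) + 2 log d, where Δ(ρ) = S_0(ρ) - S_∞(ρ). -/

import Mathlib

open ComplexOrder

/-- Partial trace over the second factor. -/
noncomputable def ptrace {A A' : Type*} [Fintype A'] (ρ : Matrix (A × A') (A × A') ℂ) :
    Matrix A A ℂ :=
  fun a b => ∑ x : A', ρ (a, x) (b, x)

open Matrix

private lemma rank_add_le' {m n : Type*} [Fintype n] [Fintype m] (A B : Matrix m n ℂ) :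
    (A + B).rank ≤ A.rank + B.rank := by
  classical
  have h : LinearMap.range (A + B).mulVecLin ≤
      LinearMap.range A.mulVecLin ⊔ LinearMap.range B.mulVecLin := by
    rintro _ ⟨x, rfl⟩
    rw [mulVecLin_add]
    exact Submodule.add_mem_sup (LinearMap.mem_range_self _ x) (LinearMap.mem_range_self _ x)
  exact (Submodule.finrank_mono h).trans
    (Submodule.finrank_add_le_finrank_add_finrank _ _)

private lemma rank_sum_le' {ι m n : Type*} [Fintype n] [Fintype m] (s : Finset ι)
    (f : ι → Matrix m n ℂ) : (∑ x ∈ s, f x).rank ≤ ∑ x ∈ s, (f x).rank := by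
  classical
  induction s using Finset.induction_on with
  | empty => simp
  | insert _ _ h ih =>
      rw [Finset.sum_insert h, Finset.sum_insert h]
      exact (rank_add_le' _ _).trans (Nat.add_le_add_left ih _)

private lemma rank_ptrace_le {a d : ℕ} (ρ : Matrix (Fin a × Fin d) (Fin a × Fin d) ℂ) :
    (ptrace ρ).rank ≤ d * ρ.rank := by
  classical
  set E : Fin d → Matrix (Fin a) (Fin a × Fin d) ℂ :=
    fun x i p => if p = (i, x) then 1 else 0 with hE
  set F : Fin d → Matrix (Fin a × Fin d) (Fin a) ℂ :=
    fun x p j => if p = (j, x) then 1 else 0 with hF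
  have hdecomp : ptrace ρ = ∑ x : Fin d, E x * ρ * F x := by
    ext i j
    have h1 : ∀ x : Fin d, (E x * ρ * F x) i j = ρ (i, x) (j, x) := by
      intro x
      simp only [Matrix.mul_apply]
      simp [Matrix.mul_apply, hE, hF, Finset.sum_ite_eq, Finset.sum_ite_eq']
    simp only [Matrix.sum_apply, h1, ptrace]
  rw [hdecomp]
  refine (rank_sum_le' _ _).trans ?_
  have h2 : ∀ x : Fin d, (E x * ρ * F x).rank ≤ ρ.rank := fun x =>
    (Matrix.rank_mul_le_left _ _).trans (Matrix.rank_mul_le_right _ _)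
  calc ∑ x : Fin d, (E x * ρ * F x).rank ≤ ∑ _x : Fin d, ρ.rank :=
        Finset.sum_le_sum fun x _ => h2 x
    _ = d * ρ.rank := by simp [Finset.sum_const, Finset.card_univ]

private lemma quad_form_le {n : Type*} [Fintype n] [DecidableEq n] {A : Matrix n n ℂ}
    (hA : A.IsHermitian) {c : ℝ} (hc : ∀ i, hA.eigenvalues i ≤ c) (x : n → ℂ) :
    (star x ⬝ᵥ A *ᵥ x).re ≤ c * (star x ⬝ᵥ x).re := by
  set U : Matrix n n ℂ := (hA.eigenvectorUnitary : Matrix n n ℂ) with hUdef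
  have hU : U * star U = 1 := Matrix.mem_unitaryGroup_iff.mp hA.eigenvectorUnitary.2
  set y : n → ℂ := star U *ᵥ x with hy
  have hsy : star y = star x ᵥ* U := by
    rw [hy, star_mulVec, ← Matrix.star_eq_conjTranspose, star_star]
  have h1 : star x ⬝ᵥ A *ᵥ x = ∑ i, (hA.eigenvalues i : ℂ) * (star (y i) * y i) := by
    conv_lhs => rw [hA.spectral_theorem, Unitary.conjStarAlgAut_apply]
    rw [← Matrix.mulVec_mulVec, ← Matrix.mulVec_mulVec, Matrix.dotProduct_mulVec, ← hsy]
    simp only [mulVec_diagonal, dotProduct, Pi.star_apply, Function.comp_apply]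
    exact Finset.sum_congr rfl fun i _ => mul_left_comm _ _ _
  have h2 : star x ⬝ᵥ x = ∑ i, star (y i) * y i := by
    have hxy : star y ⬝ᵥ y = star x ⬝ᵥ x := by
      rw [hsy, hy, Matrix.dotProduct_mulVec, Matrix.vecMul_vecMul, hU, Matrix.vecMul_one]
    rw [← hxy]
    simp [dotProduct]
  have h3 : ∀ i, star (y i) * y i = (Complex.normSq (y i) : ℂ) := fun i =>
    Complex.normSq_eq_conj_mul_self.symm
  rw [h1, h2]
  simp only [h3]
  rw [Complex.re_sum]
  have h4 : (∑ i, (Complex.normSq (y i) : ℂ)).re = ∑ i, Complex.normSq (y i) := by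
    rw [Complex.re_sum]; simp
  rw [h4, Finset.mul_sum]
  refine Finset.sum_le_sum fun i _ => ?_
  have h5 : ((hA.eigenvalues i : ℂ) * (Complex.normSq (y i) : ℂ)).re
      = hA.eigenvalues i * Complex.normSq (y i) := by norm_cast
  rw [h5]
  exact mul_le_mul_of_nonneg_right (hc i) (Complex.normSq_nonneg _)

private lemma exists_pos_eigenvalue {n : Type*} [Fintype n] [DecidableEq n]
    {M : Matrix n n ℂ} (hM : M.IsHermitian) (htr : M.trace = 1) :
    ∃ i, 0 < hM.eigenvalues i := by
  have h : M.trace = ∑ i, (hM.eigenvalues i : ℂ) := by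
    conv_lhs => rw [hM.spectral_theorem, Unitary.conjStarAlgAut_apply]
    rw [trace_mul_cycle]
    rw [Matrix.mem_unitaryGroup_iff'.mp hM.eigenvectorUnitary.2, one_mul]
    simp [Matrix.trace, Matrix.diagonal]
  rw [htr] at h
  have h2 : (1:ℝ) = ∑ i, hM.eigenvalues i := by
    have := congrArg Complex.re h
    simpa using this
  by_contra hc
  push_neg at hc
  have : ∑ i, hM.eigenvalues i ≤ 0 := Finset.sum_nonpos fun i _ => hc i
  linarith

private lemma split_dot {a d : ℕ} (ρ : Matrix (Fin a × Fin d) (Fin a × Fin d) ℂ)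
    (v : Fin a → ℂ) :
    star v ⬝ᵥ (ptrace ρ) *ᵥ v
      = ∑ x : Fin d, star (fun p : Fin a × Fin d => if p.2 = x then v p.1 else 0) ⬝ᵥ
          ρ *ᵥ (fun p : Fin a × Fin d => if p.2 = x then v p.1 else 0) := by
  simp only [dotProduct, mulVec, ptrace, Pi.star_apply, Fintype.sum_prod_type,
    apply_ite, star_zero, ite_mul, mul_ite, zero_mul, mul_zero,
    Finset.sum_ite_eq', Finset.sum_ite_eq, Finset.mem_univ, if_true,
    Finset.mul_sum, Finset.sum_mul]
  have h1 : ∀ (x : Fin d) (x1 : Fin a),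
      (∑ x2 : Fin d, ∑ x3 : Fin a,
        if x2 = x then star (v x1) * (ρ (x1, x2) (x3, x) * v x3) else 0)
      = ∑ x3 : Fin a, star (v x1) * (ρ (x1, x) (x3, x) * v x3) := by
    intro x x1
    rw [Finset.sum_comm]
    simp
  simp only [h1]
  have h2 : ∀ b : Fin a, (∑ x1 : Fin a, ∑ i : Fin d, star (v b) * (ρ (b, i) (x1, i) * v x1))
      = ∑ i : Fin d, ∑ x1 : Fin a, star (v b) * (ρ (b, i) (x1, i) * v x1) := fun b =>
    Finset.sum_comm
  simp only [h2]
  rw [Finset.sum_comm]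

private lemma dot_w {a d : ℕ} (v : Fin a → ℂ) (x : Fin d) :
    star (fun p : Fin a × Fin d => if p.2 = x then v p.1 else 0) ⬝ᵥ
      (fun p : Fin a × Fin d => if p.2 = x then v p.1 else 0) = star v ⬝ᵥ v := by
  simp [dotProduct, Fintype.sum_prod_type, apply_ite, Finset.sum_ite_eq', mul_ite]

private lemma eig_ptrace_le {a d : ℕ} (ρ : Matrix (Fin a × Fin d) (Fin a × Fin d) ℂ)
    (hρ : ρ.PosSemidef) (hA : (ptrace ρ).IsHermitian)
    {c : ℝ} (hc : ∀ j, hρ.1.eigenvalues j ≤ c) (hc0 : 0 ≤ c) (i : Fin a) :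
    hA.eigenvalues i ≤ d * c := by
  classical
  set v : Fin a → ℂ := ⇑(hA.eigenvectorBasis i) with hv
  set t : ℝ := (star v ⬝ᵥ v).re with ht
  have heq : hA.eigenvalues i = (star v ⬝ᵥ (ptrace ρ) *ᵥ v).re := by
    simpa using hA.eigenvalues_eq i
  have hsmul : star v ⬝ᵥ (ptrace ρ) *ᵥ v = (hA.eigenvalues i) • (star v ⬝ᵥ v) := by
    rw [hv, hA.mulVec_eigenvectorBasis, dotProduct_smul]
  have heq2 : hA.eigenvalues i = hA.eigenvalues i * t := by
    have h' : (star v ⬝ᵥ (ptrace ρ) *ᵥ v).re = hA.eigenvalues i * t := by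
      rw [hsmul, ht, Complex.real_smul, Complex.mul_re, Complex.ofReal_re, Complex.ofReal_im,
        zero_mul, sub_zero]
    exact heq.trans h'
  have hbound : (star v ⬝ᵥ (ptrace ρ) *ᵥ v).re ≤ d * (c * t) := by
    rw [split_dot, Complex.re_sum]
    calc ∑ x : Fin d, (star (fun p : Fin a × Fin d => if p.2 = x then v p.1 else 0) ⬝ᵥ
            ρ *ᵥ (fun p : Fin a × Fin d => if p.2 = x then v p.1 else 0)).re
        ≤ ∑ _x : Fin d, c * t := by
          refine Finset.sum_le_sum fun x _ => ?_
          have := quad_form_le hρ.1 hc (fun p : Fin a × Fin d => if p.2 = x then v p.1 else 0)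
          rwa [dot_w, ← ht] at this
      _ = d * (c * t) := by simp [Finset.sum_const, Finset.card_univ, mul_assoc]
  by_cases hpos : 0 < hA.eigenvalues i
  · have ht1 : t = 1 := by
      have h' := heq2
      nth_rewrite 1 [← mul_one (hA.eigenvalues i)] at h'
      exact (mul_left_cancel₀ (ne_of_gt hpos) h').symm
    calc hA.eigenvalues i = (star v ⬝ᵥ (ptrace ρ) *ᵥ v).re := heq
      _ ≤ d * (c * t) := hbound
      _ = d * c := by rw [ht1, mul_one]
  · push_neg at hpos
    exact hpos.trans (by positivity)

private lemma sup_eig_pos {n : Type*} [Fintype n] [DecidableEq n] [Nonempty n]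
    {M : Matrix n n ℂ} (hM : M.IsHermitian) (htr : M.trace = 1) :
    0 < ⨆ i, hM.eigenvalues i := by
  obtain ⟨i, hi⟩ := exists_pos_eigenvalue hM htr
  exact hi.trans_le (le_ciSup (Set.Finite.bddAbove (Set.finite_range _)) i)

private lemma rank_pos_of_trace_one {n : Type*} [Fintype n] [DecidableEq n]
    {M : Matrix n n ℂ} (hM : M.IsHermitian) (htr : M.trace = 1) :
    0 < M.rank := by
  obtain ⟨i, hi⟩ := exists_pos_eigenvalue hM htr
  rw [hM.rank_eq_card_non_zero_eigs]
  exact Fintype.card_pos_iff.mpr ⟨⟨i, ne_of_gt hi⟩⟩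

/-- If ρ_{AA'} is a density operator on A ⊗ A' with dim A' = d and
ρ_A = Tr_{A'} ρ_{AA'}, then `Δ(ρ_A) ≤ Δ(ρ_{AA'}) + 2 log₂ d`, where
`Δ(ρ) = S₀(ρ) - S_∞(ρ) = log₂ (rank ρ) + log₂ ‖ρ‖_∞`. -/
theorem delta_change_under_partial_trace {a d : ℕ}
    (ρ : Matrix (Fin a × Fin d) (Fin a × Fin d) ℂ)
    (hρ : ρ.PosSemidef) (htr : ρ.trace = 1)
    (hA : (ptrace ρ).IsHermitian) :
    Real.logb 2 ((ptrace ρ).rank : ℝ) + Real.logb 2 (⨆ i, hA.eigenvalues i) ≤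
      (Real.logb 2 (ρ.rank : ℝ) + Real.logb 2 (⨆ i, hρ.1.eigenvalues i)) +
        2 * Real.logb 2 (d : ℝ) := by
  classical
  have hne : Nonempty (Fin a × Fin d) := by
    by_contra h
    rw [not_nonempty_iff] at h
    have h0 : ρ.trace = 0 := by simp [Matrix.trace, Finset.univ_eq_empty]
    rw [htr] at h0
    exact one_ne_zero h0
  haveI : Nonempty (Fin a) := ⟨(Classical.arbitrary (Fin a × Fin d)).1⟩
  haveI : Nonempty (Fin d) := ⟨(Classical.arbitrary (Fin a × Fin d)).2⟩
  have hd0 : 0 < d := Fin.pos_iff_nonempty.mpr ‹_›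
  have hd1 : (1:ℝ) ≤ (d:ℝ) := by exact_mod_cast hd0
  have htrA : (ptrace ρ).trace = 1 := by
    have h' : (ptrace ρ).trace = ρ.trace := by
      simp [Matrix.trace, ptrace, Matrix.diag, Fintype.sum_prod_type]
    rw [h', htr]
  -- positivity facts
  have hRpos : 0 < ρ.rank := rank_pos_of_trace_one hρ.1 htr
  have hrpos : 0 < (ptrace ρ).rank := rank_pos_of_trace_one hA htrA
  have hlampos : 0 < ⨆ i, hρ.1.eigenvalues i := sup_eig_pos hρ.1 htr
  have hmupos : 0 < ⨆ i, hA.eigenvalues i := sup_eig_pos hA htrA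
  set lam : ℝ := ⨆ i, hρ.1.eigenvalues i with hlam
  set mu : ℝ := ⨆ i, hA.eigenvalues i with hmu
  -- the two key inequalities
  have hrank : ((ptrace ρ).rank : ℝ) ≤ (d:ℝ) * (ρ.rank : ℝ) := by
    exact_mod_cast rank_ptrace_le ρ
  have hmule : mu ≤ (d:ℝ) * lam := by
    refine ciSup_le fun i => ?_
    exact eig_ptrace_le ρ hρ hA
      (fun j => le_ciSup (Set.Finite.bddAbove (Set.finite_range _)) j) (le_of_lt hlampos) i
  -- log arithmetic
  have h1 : Real.logb 2 ((ptrace ρ).rank : ℝ) ≤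
      Real.logb 2 (d:ℝ) + Real.logb 2 (ρ.rank : ℝ) := by
    have := Real.logb_le_logb_of_le (b := 2) one_lt_two
      (by exact_mod_cast hrpos) hrank
    rwa [Real.logb_mul (by positivity) (by exact_mod_cast hRpos.ne')] at this
  have h2 : Real.logb 2 mu ≤ Real.logb 2 (d:ℝ) + Real.logb 2 lam := by
    have := Real.logb_le_logb_of_le (b := 2) one_lt_two hmupos hmule
    rwa [Real.logb_mul (by positivity) (ne_of_gt hlampos)] at this
  linarith
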